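/- Let g = gcd(c, b−a), ℓ = (b−a)/g and m = c/g. Then the binomial z_1^ℓ · z_3^m − z_2^m · z_4^ℓ belongs to J. -/
import Mathlib


open MvPolynomial

theorem stmt_9 {K : Type*} [Field K] (a b c : ℕ)
    (ha : 0 < a) (hab : a < b) (hbc : b < c)
    (hgcd : Nat.gcd a (Nat.gcd b c) = 1)
    (u : Fin 4 → MvPolynomial (Fin 2) K)
    (hu0 : u 0 = X 0 ^ c) (hu1 : u 1 = X 0 ^ b * X 1 ^ a)
    (hu2 : u 2 = X 0 ^ a * X 1 ^ b) (hu3 : u 3 = X 1 ^ c)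
    (I mm : Ideal (MvPolynomial (Fin 2) K))
    (hI : I = Ideal.span {u 0, u 1, u 2, u 3})
    (hmm : mm = Ideal.span {(X 0 : MvPolynomial (Fin 2) K), X 1})
    (J : Ideal (MvPolynomial (Fin 4) K))
    (hJ : ∀ f : MvPolynomial (Fin 4) K,
      f ∈ J ↔ ∀ d : ℕ, aeval u (homogeneousComponent d f) ∈ mm * I ^ d)
    :
    (X 0 : MvPolynomial (Fin 4) K) ^ ((b - a) / Nat.gcd c (b - a)) *
        X 2 ^ (c / Nat.gcd c (b - a)) -
      X 1 ^ (c / Nat.gcd c (b - a)) * X 3 ^ ((b - a) / Nat.gcd c (b - a)) ∈ J := by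
  set g := Nat.gcd c (b - a) with hg
  set l := (b - a) / g with hl
  set m := c / g with hm
  set A : MvPolynomial (Fin 4) K := X 0 ^ l * X 2 ^ m with hA
  set B : MvPolynomial (Fin 4) K := X 1 ^ m * X 3 ^ l with hB
  -- homogeneity
  have hAh : A.IsHomogeneous (l + m) := by
    simpa using (isHomogeneous_X_pow (R := K) (0 : Fin 4) l).mul
      (isHomogeneous_X_pow (R := K) (2 : Fin 4) m)
  have hBh : B.IsHomogeneous (l + m) := by
    have := (isHomogeneous_X_pow (R := K) (1 : Fin 4) m).mul
      (isHomogeneous_X_pow (R := K) (3 : Fin 4) l)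
    simpa [Nat.add_comm] using this
  have hfh : (A - B).IsHomogeneous (l + m) := hAh.sub hBh
  -- key exponent identity
  have hgpos : 0 < g := Nat.gcd_pos_of_pos_left _ (by omega)
  have hdvd1 : g ∣ c := Nat.gcd_dvd_left _ _
  have hdvd2 : g ∣ (b - a) := Nat.gcd_dvd_right _ _
  obtain ⟨m', hm'⟩ := hdvd1
  obtain ⟨l', hl'⟩ := hdvd2
  have hmm' : m = m' := by rw [hm, hm', Nat.mul_div_cancel_left _ hgpos]
  have hll' : l = l' := by rw [hl, hl', Nat.mul_div_cancel_left _ hgpos]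
  have hb : b = g * l' + a := by omega
  have hkey : c * l + a * m = b * m := by rw [hmm', hll', hm', hb]; ring
  -- aeval of A and B agree
  have haeval : aeval u A = aeval u B := by
    rw [hA, hB]
    simp only [map_mul, map_pow, aeval_X, hu0, hu1, hu2, hu3, mul_pow, ← pow_mul]
    rw [mul_assoc (X 0 ^ (b * m)), ← mul_assoc (X 0 ^ (c * l)), ← pow_add, ← pow_add,
      hkey, show a * m + c * l = b * m by omega]
  rw [hJ]
  intro d
  rw [homogeneousComponent_of_mem ((mem_homogeneousSubmodule _ _).2 hfh)]
  split
  · rw [map_sub, haeval, sub_self]; exact Ideal.zero_mem _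
  · simp
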